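/- Suppose the matrix A is invertible (rank two). If C_1 λ_1 / C_3 − (b_0 C_1/C_3 + a_0)(d_0 C_1/C_3 + c_0) > 0, then x_{2n} → ∞, x_{2n+1} → 0, y_{2n} → ∞ and y_{2n+1} → 0 as n → ∞. -/

import Mathlib

open Finset Filter Topology

private noncomputable def PQaux (a b c d : ℕ → ℝ) (x0 y0 : ℝ) : ℕ → ℝ × ℝ
  | 0 => (x0, y0)
  | n + 1 =>
    (b n * (PQaux a b c d x0 y0 n).1 + a n * (PQaux a b c d x0 y0 n).2,
     d n * (PQaux a b c d x0 y0 n).1 + c n * (PQaux a b c d x0 y0 n).2)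

set_option maxHeartbeats 4000000 in
theorem stmt_18
    (x y a b c d : ℕ → ℝ)
    (hx0 : 0 < x 0) (hy0 : 0 < y 0)
    (hapos : ∀ n, 0 < a n) (hbpos : ∀ n, 0 < b n)
    (hcpos : ∀ n, 0 < c n) (hdpos : ∀ n, 0 < d n)
    (haper : ∀ n, a (n + 2) = a n) (hbper : ∀ n, b (n + 2) = b n)
    (hcper : ∀ n, c (n + 2) = c n) (hdper : ∀ n, d (n + 2) = d n)
    (hxrec : ∀ n, x (n + 1) = a n / x n + b n / y n)
    (hyrec : ∀ n, y (n + 1) = c n / x n + d n / y n)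
    (A : Matrix (Fin 2) (Fin 2) ℝ)
    (hAdef : A = !![a 1 * d 0 + b 0 * b 1, a 0 * b 1 + a 1 * c 0;
                    b 0 * d 1 + c 1 * d 0, a 0 * d 1 + c 0 * c 1])
    (hA : IsUnit A)
    (D lam1 lam2 : ℝ)
    (hD : D = Real.sqrt ((a 1 * d 0 + b 0 * b 1 - a 0 * d 1 - c 0 * c 1) ^ 2 +
      4 * (a 0 * b 1 + a 1 * c 0) * (b 0 * d 1 + c 1 * d 0)))
    (hlam1 : lam1 = (a 1 * d 0 + b 0 * b 1 + a 0 * d 1 + c 0 * c 1 + D) / 2)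
    (hlam2 : lam2 = (a 1 * d 0 + b 0 * b 1 + a 0 * d 1 + c 0 * c 1 - D) / 2)
    (C1 C3 : ℝ)
    (hC1 : C1 = (a 0 * b 1 + a 1 * c 0) / (lam1 - lam2) *
      ((b 0 * d 1 + c 1 * d 0) / (lam1 - (a 1 * d 0 + b 0 * b 1)) * x 0 + y 0))
    (hC3 : C3 = ((b 0 * d 1 + c 1 * d 0) * x 0 + (lam1 - (a 1 * d 0 + b 0 * b 1)) * y 0) /
      (lam1 - lam2))
    (hgt : 0 < C1 * lam1 / C3 - (b 0 * (C1 / C3) + a 0) * (d 0 * (C1 / C3) + c 0))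
    : Tendsto (fun n => x (2 * n)) atTop atTop ∧
      Tendsto (fun n => x (2 * n + 1)) atTop (nhds 0) ∧
      Tendsto (fun n => y (2 * n)) atTop atTop ∧
      Tendsto (fun n => y (2 * n + 1)) atTop (nhds 0) := by
  clear hA hAdef
  have ha0 := hapos 0
  have ha1 := hapos 1
  have hb0 := hbpos 0
  have hb1 := hbpos 1
  have hc0 := hcpos 0
  have hc1 := hcpos 1
  have hd0 := hdpos 0
  have hd1 := hdpos 1
  -- abbreviations for matrix entries
  set A11 : ℝ := a 1 * d 0 + b 0 * b 1 with hA11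
  set A12 : ℝ := a 0 * b 1 + a 1 * c 0 with hA12
  set A21 : ℝ := b 0 * d 1 + c 1 * d 0 with hA21
  set A22 : ℝ := a 0 * d 1 + c 0 * c 1 with hA22
  clear_value A11 A12 A21 A22
  have hA11p : 0 < A11 := by rw [hA11]; positivity
  have hA12p : 0 < A12 := by rw [hA12]; positivity
  have hA21p : 0 < A21 := by rw [hA21]; positivity
  have hA22p : 0 < A22 := by rw [hA22]; positivity
  -- positivity of x, y
  have hxy : ∀ n, 0 < x n ∧ 0 < y n := by
    intro n
    induction n with
    | zero => exact ⟨hx0, hy0⟩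
    | succ m ih =>
      constructor
      · rw [hxrec]
        exact add_pos (div_pos (hapos m) ih.1) (div_pos (hbpos m) ih.2)
      · rw [hyrec]
        exact add_pos (div_pos (hcpos m) ih.1) (div_pos (hdpos m) ih.2)
  have hxp : ∀ n, 0 < x n := fun n => (hxy n).1
  have hyp : ∀ n, 0 < y n := fun n => (hxy n).2
  -- periodicity at even/odd indices
  have hper : ∀ (f : ℕ → ℝ), (∀ n, f (n + 2) = f n) → ∀ n k, f (2 * n + k) = f k := by
    intro f hf n
    induction n with
    | zero => intro k; norm_num
    | succ m ih =>
      intro k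
      rw [show 2 * (m + 1) + k = (2 * m + k) + 2 by ring, hf, ih]
  have hev : ∀ (f : ℕ → ℝ) (hf : ∀ n, f (n + 2) = f n) (n : ℕ), f (2 * n) = f 0 := by
    intro f hf n
    have := hper f hf n 0
    simpa using this
  have hod : ∀ (f : ℕ → ℝ) (hf : ∀ n, f (n + 2) = f n) (n : ℕ), f (2 * n + 1) = f 1 :=
    fun f hf n => hper f hf n 1
  -- D facts
  rw [show A11 - a 0 * d 1 - c 0 * c 1 = A11 - A22 from by rw [hA22]; ring] at hD
  rw [show A11 + a 0 * d 1 + c 0 * c 1 = A11 + A22 from by rw [hA22]; ring] at hlam1 hlam2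
  have hD2 : D ^ 2 = (A11 - A22) ^ 2 + 4 * A12 * A21 := by
    rw [hD]; exact Real.sq_sqrt (by positivity)
  have hDpos : 0 < D := by
    rw [hD]; apply Real.sqrt_pos.2; positivity
  have hp4 : 0 < 4 * A12 * A21 := by positivity
  have h1 : A11 - A22 < D := by
    by_contra hcon
    push_neg at hcon
    have hmul := mul_self_le_mul_self hDpos.le hcon
    have hsq : D ^ 2 ≤ (A11 - A22) ^ 2 := by
      rw [pow_two, pow_two]; exact hmul
    linarith
  have h2 : A22 - A11 < D := by
    by_contra hcon
    push_neg at hcon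
    have hmul := mul_self_le_mul_self hDpos.le hcon
    have hsq : D ^ 2 ≤ (A22 - A11) ^ 2 := by
      rw [pow_two, pow_two]; exact hmul
    have : (A22 - A11) ^ 2 = (A11 - A22) ^ 2 := by ring
    linarith
  have hl1A11 : A11 < lam1 := by rw [hlam1]; linarith
  have hl1A22 : A22 < lam1 := by rw [hlam1]; linarith
  have hl2A11 : lam2 < A11 := by rw [hlam2]; linarith
  have hlam1pos : 0 < lam1 := by linarith
  have hdiff : lam1 - lam2 = D := by rw [hlam1, hlam2]; ring
  have hdiffpos : 0 < lam1 - lam2 := by rw [hdiff]; exact hDpos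
  have hsum : lam1 + lam2 = A11 + A22 := by rw [hlam1, hlam2]; ring
  have habs2 : |lam2| < lam1 := by
    rw [abs_lt]; constructor <;> linarith
  have hchar1 : lam1 ^ 2 - (A11 + A22) * lam1 + (A11 * A22 - A12 * A21) = 0 := by
    rw [hlam1]; linear_combination hD2 / 4
  have hchar2 : lam2 ^ 2 - (A11 + A22) * lam2 + (A11 * A22 - A12 * A21) = 0 := by
    rw [hlam2]; linear_combination hD2 / 4
  have hkey : (lam1 - A11) * (A11 - lam2) = A12 * A21 := by
    have hprod : lam1 * lam2 = A11 * A22 - A12 * A21 := by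
      rw [hlam1, hlam2]; linear_combination -hD2 / 4
    linear_combination A11 * hsum - hprod
  -- the linearizing sequences P, Q
  set P : ℕ → ℝ := fun n => (PQaux a b c d (x 0) (y 0) n).1 with hPdef
  set Q : ℕ → ℝ := fun n => (PQaux a b c d (x 0) (y 0) n).2 with hQdef
  have hP0 : P 0 = x 0 := rfl
  have hQ0 : Q 0 = y 0 := rfl
  have hPs : ∀ n, P (n + 1) = b n * P n + a n * Q n := fun n => rfl
  have hQs : ∀ n, Q (n + 1) = d n * P n + c n * Q n := fun n => rfl
  clear_value P Q
  have hPQpos : ∀ n, 0 < P n ∧ 0 < Q n := by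
    intro n
    induction n with
    | zero => rw [hP0, hQ0]; exact ⟨hx0, hy0⟩
    | succ m ih =>
      refine ⟨?_, ?_⟩
      · rw [hPs]
        exact add_pos (mul_pos (hbpos m) ih.1) (mul_pos (hapos m) ih.2)
      · rw [hQs]
        exact add_pos (mul_pos (hdpos m) ih.1) (mul_pos (hcpos m) ih.2)
  have hPp : ∀ n, 0 < P n := fun n => (hPQpos n).1
  have hQp : ∀ n, 0 < Q n := fun n => (hPQpos n).2
  -- x n / y n = P n / Q n
  have hratio : ∀ n, x n * Q n = y n * P n := by
    intro n
    induction n with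
    | zero => rw [hP0, hQ0]; ring
    | succ m ih =>
      have hxm := (hxp m).ne'
      have hym := (hyp m).ne'
      have e1 : x (m + 1) * (x m * y m) = a m * y m + b m * x m := by
        rw [hxrec]; field_simp
      have e2 : y (m + 1) * (x m * y m) = c m * y m + d m * x m := by
        rw [hyrec]; field_simp
      have key : (x m * y m) * (x (m + 1) * Q (m + 1)) = (x m * y m) * (y (m + 1) * P (m + 1)) := by
        rw [hPs, hQs]
        linear_combination (d m * P m + c m * Q m) * e1 - (b m * P m + a m * Q m) * e2 -
          (a m * d m - b m * c m) * ih
      have hxym : x m * y m ≠ 0 := by positivity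
      exact mul_left_cancel₀ hxym key
  -- two-step recurrence for P, Q at even indices
  have hP2 : ∀ n, P (2 * (n + 1)) = A11 * P (2 * n) + A12 * Q (2 * n) := by
    intro n
    have e1 : (2 : ℕ) * (n + 1) = (2 * n + 1) + 1 := by ring
    rw [e1, hPs, hPs, hQs, hev a haper n, hev b hbper n, hev c hcper n,
      hev d hdper n, hod a haper n, hod b hbper n]
    rw [hA11, hA12]; ring
  have hQ2 : ∀ n, Q (2 * (n + 1)) = A21 * P (2 * n) + A22 * Q (2 * n) := by
    intro n
    have e1 : (2 : ℕ) * (n + 1) = (2 * n + 1) + 1 := by ring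
    rw [e1, hQs, hPs, hQs, hev a haper n, hev b hbper n, hev c hcper n,
      hev d hdper n, hod c hcper n, hod d hdper n]
    rw [hA21, hA22]; ring
  -- eigendirections
  set w0 : ℝ := A21 * x 0 + (lam1 - A11) * y 0 with hw0
  set v0 : ℝ := A21 * x 0 + (lam2 - A11) * y 0 with hv0
  clear_value w0 v0
  have hw0p : 0 < w0 := by
    rw [hw0]
    exact add_pos (mul_pos hA21p (hxp 0)) (mul_pos (by linarith) (hyp 0))
  have hw : ∀ n, A21 * P (2 * n) + (lam1 - A11) * Q (2 * n) = lam1 ^ n * w0 := by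
    intro n
    induction n with
    | zero => simp [hP0, hQ0, hw0]
    | succ m ih =>
      rw [hP2, hQ2, pow_succ]
      linear_combination lam1 * ih - Q (2 * m) * hchar1
  have hv : ∀ n, A21 * P (2 * n) + (lam2 - A11) * Q (2 * n) = lam2 ^ n * v0 := by
    intro n
    induction n with
    | zero => simp [hP0, hQ0, hv0]
    | succ m ih =>
      rw [hP2, hQ2, pow_succ]
      linear_combination lam2 * ih - Q (2 * m) * hchar2
  -- geometric ratio
  set t : ℕ → ℝ := fun n => (lam2 / lam1) ^ n with htdef
  have ht0 : Tendsto t atTop (nhds 0) := by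
    apply tendsto_pow_atTop_nhds_zero_of_abs_lt_one
    rw [abs_div, abs_of_pos hlam1pos, div_lt_one hlam1pos]
    exact habs2
  have hlam2n : ∀ n, lam2 ^ n = lam1 ^ n * t n := by
    intro n
    show lam2 ^ n = lam1 ^ n * (lam2 / lam1) ^ n
    rw [div_pow]
    field_simp
  clear_value t
  have hl1n : ∀ n : ℕ, (0:ℝ) < lam1 ^ n := fun n => pow_pos hlam1pos n
  -- closed forms
  have hQf : ∀ n, (lam1 - lam2) * Q (2 * n) = lam1 ^ n * (w0 - v0 * t n) := by
    intro n
    have := hw n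
    have := hv n
    have h3 := hlam2n n
    linear_combination hw n - hv n - v0 * h3
  have hPf : ∀ n, (lam1 - lam2) * (A21 * P (2 * n)) =
      lam1 ^ n * ((A11 - lam2) * w0 + (lam1 - A11) * v0 * t n) := by
    intro n
    have h3 := hlam2n n
    linear_combination (A11 - lam2) * hw n + (lam1 - A11) * hv n + (lam1 - A11) * v0 * h3
  have hdenp : ∀ n, 0 < w0 - v0 * t n := by
    intro n
    have h := hQf n
    have hpos : (0:ℝ) < lam1 ^ n * (w0 - v0 * t n) := by
      rw [← h]
      exact mul_pos hdiffpos (hQp (2 * n))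
    rcases mul_pos_iff.1 hpos with ⟨_, hh⟩ | ⟨hh, _⟩
    · exact hh
    · exact absurd (hl1n n) (by linarith)
  -- formula for s(2n) = x(2n)/y(2n)
  have hs : ∀ n, x (2 * n) / y (2 * n) =
      ((A11 - lam2) * w0 + (lam1 - A11) * v0 * t n) / (A21 * (w0 - v0 * t n)) := by
    intro n
    have hyn := (hyp (2 * n)).ne'
    have hQn := (hQp (2 * n)).ne'
    have hdn := (hdenp n).ne'
    have hr := hratio (2 * n)
    have hq := hQf n
    have hp := hPf n
    rw [div_eq_div_iff hyn (by positivity)]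
    -- x(2n) * (A21 * (w0 - v0 * t n)) = num * y(2n)
    have hcan : lam1 ^ n * (x (2 * n) * (A21 * (w0 - v0 * t n))) =
        lam1 ^ n * (((A11 - lam2) * w0 + (lam1 - A11) * v0 * t n) * y (2 * n)) := by
      calc lam1 ^ n * (x (2 * n) * (A21 * (w0 - v0 * t n)))
          = A21 * (x (2 * n) * (lam1 ^ n * (w0 - v0 * t n))) := by ring
        _ = A21 * (x (2 * n) * ((lam1 - lam2) * Q (2 * n))) := by rw [hq]
        _ = (lam1 - lam2) * A21 * (y (2 * n) * P (2 * n)) := by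
            rw [show A21 * (x (2 * n) * ((lam1 - lam2) * Q (2 * n))) =
              (lam1 - lam2) * A21 * (x (2 * n) * Q (2 * n)) by ring, hr]
        _ = y (2 * n) * ((lam1 - lam2) * (A21 * P (2 * n))) := by ring
        _ = y (2 * n) * (lam1 ^ n * ((A11 - lam2) * w0 + (lam1 - A11) * v0 * t n)) := by rw [hp]
        _ = lam1 ^ n * (((A11 - lam2) * w0 + (lam1 - A11) * v0 * t n) * y (2 * n)) := by ring
    exact mul_left_cancel₀ (hl1n n).ne' hcan
  -- the limit L of s(2n)
  set L : ℝ := (A11 - lam2) / A21 with hL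
  clear_value L
  have hLpos : 0 < L := by
    rw [hL]; exact div_pos (by linarith) hA21p
  have hslim : Tendsto (fun n => x (2 * n) / y (2 * n)) atTop (nhds L) := by
    have hnum : Tendsto (fun n => (A11 - lam2) * w0 + (lam1 - A11) * v0 * t n) atTop
        (nhds ((A11 - lam2) * w0)) := by
      have := (tendsto_const_nhds (x := ((lam1 - A11) * v0)) (f := atTop (α := ℕ))).mul ht0
      have h := tendsto_const_nhds (x := ((A11 - lam2) * w0)) (f := atTop (α := ℕ)) |>.add
        (((tendsto_const_nhds (x := ((lam1 - A11) * v0)) (f := atTop (α := ℕ))).mul ht0))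
      simpa [mul_assoc] using h
    have hden : Tendsto (fun n => A21 * (w0 - v0 * t n)) atTop (nhds (A21 * w0)) := by
      have h := (tendsto_const_nhds (x := A21) (f := atTop (α := ℕ))).mul
        ((tendsto_const_nhds (x := w0) (f := atTop (α := ℕ))).sub
          ((tendsto_const_nhds (x := v0) (f := atTop (α := ℕ))).mul ht0))
      simpa using h
    have hne : A21 * w0 ≠ 0 := by positivity
    have := hnum.div hden hne
    have heq : (A11 - lam2) * w0 / (A21 * w0) = L := by
      rw [hL]; field_simp [hw0p.ne']
    rw [heq] at this
    exact this.congr (fun n => (hs n).symm)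
  -- odd-index ratio
  have hsodd : ∀ n, x (2 * n + 1) / y (2 * n + 1) =
      (b 0 * (x (2 * n) / y (2 * n)) + a 0) / (d 0 * (x (2 * n) / y (2 * n)) + c 0) := by
    intro n
    have hgen : ∀ m, x (m + 1) / y (m + 1) =
        (b m * (x m / y m) + a m) / (d m * (x m / y m) + c m) := by
      intro m
      have hxm := (hxp m).ne'
      have hym := (hyp m).ne'
      have hypos : 0 < d m * (x m / y m) + c m := by
        have := hdpos m; have := hcpos m; have := hxp m; have := hyp m; positivity
      rw [hxrec, hyrec]
      rw [div_eq_div_iff (by have := hcpos m; have := hdpos m; have := hxp m; have := hyp m; positivity) (ne_of_gt hypos)]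
      field_simp
      ring
    rw [hgen (2 * n), hev a haper n, hev b hbper n, hev c hcper n, hev d hdper n]
  set sstar : ℝ := (b 0 * L + a 0) / (d 0 * L + c 0) with hsstar
  clear_value sstar
  have hdenL : 0 < d 0 * L + c 0 := by have := hdpos 0; have := hcpos 0; positivity
  have hnumL : 0 < b 0 * L + a 0 := by have := hbpos 0; have := hapos 0; positivity
  have hnumL' : 0 < a 0 + b 0 * L := by linarith
  have hsstarpos : 0 < sstar := by rw [hsstar]; exact div_pos hnumL hdenL
  have hsoddlim : Tendsto (fun n => x (2 * n + 1) / y (2 * n + 1)) atTop (nhds sstar) := by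
    have h := ((tendsto_const_nhds (x := b 0) (f := atTop (α := ℕ))).mul hslim |>.add
      (tendsto_const_nhds (x := a 0) (f := atTop (α := ℕ)))).div
      (((tendsto_const_nhds (x := d 0) (f := atTop (α := ℕ))).mul hslim).add
        (tendsto_const_nhds (x := c 0) (f := atTop (α := ℕ)))) hdenL.ne'
    have h' : Tendsto (fun n => (b 0 * (x (2 * n) / y (2 * n)) + a 0) /
        (d 0 * (x (2 * n) / y (2 * n)) + c 0)) atTop (nhds sstar) := by
      rw [hsstar]
      exact h
    exact h'.congr (fun n => (hsodd n).symm)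
  -- eigen relation
  have hEig1 : A11 * L + A12 = lam1 * L := by
    rw [hL]; field_simp; linear_combination -hkey
  -- products
  have hpe : ∀ m, x (m + 1) * x m = a m + b m * (x m / y m) := by
    intro m
    have hxm := (hxp m).ne'
    have hym := (hyp m).ne'
    rw [hxrec]; field_simp
  have hpe0 : ∀ n, x (2 * n + 1) * x (2 * n) = a 0 + b 0 * (x (2 * n) / y (2 * n)) := by
    intro n
    rw [hpe (2 * n), hev a haper n, hev b hbper n]
  have hpe1 : ∀ n, x (2 * n + 2) * x (2 * n + 1) =
      a 1 + b 1 * (x (2 * n + 1) / y (2 * n + 1)) := by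
    intro n
    rw [hpe (2 * n + 1), hod a haper n, hod b hbper n]
  have hposa0 : ∀ n, 0 < a 0 + b 0 * (x (2 * n) / y (2 * n)) := by
    intro n
    have := hapos 0; have := hbpos 0; have := hxp (2 * n); have := hyp (2 * n); positivity
  -- ratio of even terms
  have hRid : ∀ n, x (2 * (n + 1)) / x (2 * n) =
      (a 1 + b 1 * (x (2 * n + 1) / y (2 * n + 1))) / (a 0 + b 0 * (x (2 * n) / y (2 * n))) := by
    intro n
    have e1 := hpe0 n
    have e2 := hpe1 n
    have hx1 := hxp (2 * n)
    have hx2 := hxp (2 * n + 1)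
    rw [show 2 * (n + 1) = 2 * n + 2 by ring]
    rw [div_eq_div_iff hx1.ne' (hposa0 n).ne', ← e1, ← e2]
    ring
  set rho : ℝ := (a 1 + b 1 * sstar) / (a 0 + b 0 * L) with hrho
  clear_value rho
  have hRlim : Tendsto (fun n => x (2 * (n + 1)) / x (2 * n)) atTop (nhds rho) := by
    have h := ((tendsto_const_nhds (x := a 1) (f := atTop (α := ℕ))).add
      ((tendsto_const_nhds (x := b 1) (f := atTop (α := ℕ))).mul hsoddlim)).div
      ((tendsto_const_nhds (x := a 0) (f := atTop (α := ℕ))).add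
        ((tendsto_const_nhds (x := b 0) (f := atTop (α := ℕ))).mul hslim)) hnumL'.ne'
    have h' : Tendsto (fun n => (a 1 + b 1 * (x (2 * n + 1) / y (2 * n + 1))) /
        (a 0 + b 0 * (x (2 * n) / y (2 * n)))) atTop (nhds rho) := by
      rw [hrho]
      exact h
    exact h'.congr (fun n => (hRid n).symm)
  -- C1, C3 values
  have hC3v : C3 = w0 / (lam1 - lam2) := by rw [hC3, hw0]
  have hC3pos : 0 < C3 := by rw [hC3v]; positivity
  have hne2 : lam1 - A11 ≠ 0 := by linarith
  have hC1alt : C1 = A12 / ((lam1 - A11) * (lam1 - lam2)) * w0 := by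
    rw [hC1, hw0]
    field_simp
  have hLalt : L = A12 / (lam1 - A11) := by
    rw [hL, div_eq_div_iff hA21p.ne' hne2]
    linear_combination hkey
  have hC1v : C1 = L * C3 := by
    rw [hC1alt, hLalt, hC3v]
    field_simp
  have hLC : C1 / C3 = L := by rw [hC1v]; field_simp
  have hgt' : 0 < L * lam1 - (b 0 * L + a 0) * (d 0 * L + c 0) := by
    have h1 : C1 * lam1 / C3 = L * lam1 := by
      rw [hC1v]; field_simp
    rw [h1, hLC] at hgt
    exact hgt
  -- rho > 1
  have hnumid : (a 1 + b 1 * sstar) * (d 0 * L + c 0) = lam1 * L := by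
    rw [hsstar]
    have e0 : (a 1 + b 1 * ((b 0 * L + a 0) / (d 0 * L + c 0))) * (d 0 * L + c 0) =
        a 1 * (d 0 * L + c 0) + b 1 * (b 0 * L + a 0) := by
      field_simp
    rw [e0]
    linear_combination hEig1 - L * hA11 - hA12
  have hrho1 : 1 < rho := by
    rw [hrho, lt_div_iff₀ hnumL']
    have hx1 : (a 0 + b 0 * L) * (d 0 * L + c 0) < (a 1 + b 1 * sstar) * (d 0 * L + c 0) := by
      rw [hnumid]
      have : (b 0 * L + a 0) * (d 0 * L + c 0) = (a 0 + b 0 * L) * (d 0 * L + c 0) := by ring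
      calc (a 0 + b 0 * L) * (d 0 * L + c 0) = (b 0 * L + a 0) * (d 0 * L + c 0) := by ring
        _ < L * lam1 := by linarith
        _ = lam1 * L := by ring
    have := (mul_lt_mul_iff_of_pos_right hdenL).1 hx1
    linarith
  -- growth to infinity of x(2n)
  have hxeven : Tendsto (fun n => x (2 * n)) atTop atTop := by
    set rho' : ℝ := (1 + rho) / 2 with hrho'
    have hrho'1 : 1 < rho' := by rw [hrho']; linarith
    have hev : ∀ᶠ n in atTop, rho' ≤ x (2 * (n + 1)) / x (2 * n) := by
      apply hRlim.eventually (eventually_ge_nhds ?_)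
      rw [hrho']; linarith
    rw [eventually_atTop] at hev
    obtain ⟨N, hN⟩ := hev
    have hu : Tendsto (fun n => x (2 * (n + N))) atTop atTop := by
      refine tendsto_atTop_of_geom_le (v := fun n => x (2 * (n + N))) (c := rho')
        (hxp _) hrho'1 ?_
      intro n
      have h := hN (n + N) (Nat.le_add_left N n)
      have hxn := hxp (2 * (n + N))
      have h2 : rho' * x (2 * (n + N)) ≤ x (2 * ((n + N) + 1)) := by
        rw [le_div_iff₀ hxn] at h
        linarith
      have e : 2 * ((n + N) + 1) = 2 * ((n + 1) + N) := by ring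
      rwa [e] at h2
    exact (tendsto_add_atTop_iff_nat (f := fun n => x (2 * n)) N).mp hu
  -- x(2n+1) → 0
  have hxinv : Tendsto (fun n => (x (2 * n))⁻¹) atTop (nhds 0) := hxeven.inv_tendsto_atTop
  have hxodd : Tendsto (fun n => x (2 * n + 1)) atTop (nhds 0) := by
    have h := ((tendsto_const_nhds (x := a 0) (f := atTop (α := ℕ))).add
      ((tendsto_const_nhds (x := b 0) (f := atTop (α := ℕ))).mul hslim)).mul hxinv
    rw [mul_zero] at h
    apply h.congr
    intro n
    have e := hpe0 n
    have hxn := (hxp (2 * n)).ne'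
    field_simp
    linear_combination -e
  -- y(2n) → ∞
  have hyeven : Tendsto (fun n => y (2 * n)) atTop atTop := by
    have h := hxeven.atTop_mul_pos (inv_pos.2 hLpos) (hslim.inv₀ hLpos.ne')
    apply h.congr
    intro n
    have hxn := (hxp (2 * n)).ne'
    have hyn := (hyp (2 * n)).ne'
    field_simp
  -- y(2n+1) → 0
  have hyodd : Tendsto (fun n => y (2 * n + 1)) atTop (nhds 0) := by
    have h := hxodd.div hsoddlim hsstarpos.ne'
    simp only [zero_div] at h
    apply h.congr
    intro n
    have hxn := (hxp (2 * n + 1)).ne'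
    have hyn := (hyp (2 * n + 1)).ne'
    show x (2 * n + 1) / (x (2 * n + 1) / y (2 * n + 1)) = y (2 * n + 1)
    field_simp
  exact ⟨hxeven, hxodd, hyeven, hyodd⟩
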